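/- arXiv:1805.11377 — 3 statements merged into one kernel-verified Lean document; each statement's English description precedes it below -/
import Mathlib

section
/- Let f : ℝ → ℝ be 2π-periodic and continuous at a point t, and integrable on [-π,π]. Then the Abel means (1/(2π)) ∫_{-π}^{π} f(u+t) · (1 - r^2)/(1 - 2r cos u + r^2) du converge to f(t) as r → 1⁻. -/
set_option maxHeartbeats 1000000

open Real Filter MeasureTheory Set

noncomputable def pker (r u : ℝ) : ℝ := (1 - r ^ 2) / (1 - 2 * r * Real.cos u + r ^ 2)

lemma pker_denom_pos {r : ℝ} (hr0 : 0 ≤ r) (hr1 : r < 1) (u : ℝ) :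
    0 < 1 - 2 * r * Real.cos u + r ^ 2 := by
  nlinarith [Real.cos_le_one u, sq_nonneg (1 - r), mul_pos (sub_pos.2 hr1) (sub_pos.2 hr1)]

lemma pker_nonneg {r : ℝ} (hr0 : 0 ≤ r) (hr1 : r < 1) (u : ℝ) : 0 ≤ pker r u :=
  div_nonneg (by nlinarith) (pker_denom_pos hr0 hr1 u).le

lemma pker_cont {r : ℝ} (hr0 : 0 ≤ r) (hr1 : r < 1) : Continuous (pker r) :=
  continuous_const.div (by continuity) (fun u => (pker_denom_pos hr0 hr1 u).ne')

lemma pker_hasDeriv {r : ℝ} (hr0 : 0 ≤ r) (hr1 : r < 1) {u : ℝ} (hu : u ∈ Ioo (-π) π) :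
    HasDerivAt (fun u => 2 * Real.arctan ((1 + r) / (1 - r) * Real.tan (u / 2)))
      ((1 - r ^ 2) / (1 - 2 * r * Real.cos u + r ^ 2)) u := by
  set c : ℝ := (1 + r) / (1 - r) with hc
  have hcoshalf : 0 < Real.cos (u / 2) := by
    apply Real.cos_pos_of_mem_Ioo
    constructor <;> [linarith [hu.1]; linarith [hu.2]]
  have h1 : HasDerivAt (fun u : ℝ => u / 2) (1 / 2) u := by
    simpa using (hasDerivAt_id u).div_const 2
  have h2 : HasDerivAt (fun u : ℝ => Real.tan (u / 2)) (1 / Real.cos (u / 2) ^ 2 * (1 / 2)) u :=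
    by have := (Real.hasDerivAt_tan hcoshalf.ne').comp u h1; exact this
  have h3 : HasDerivAt (fun u : ℝ => c * Real.tan (u / 2))
      (c * (1 / Real.cos (u / 2) ^ 2 * (1 / 2))) u := h2.const_mul c
  have h4 : HasDerivAt (fun u : ℝ => Real.arctan (c * Real.tan (u / 2)))
      (1 / (1 + (c * Real.tan (u / 2)) ^ 2) * (c * (1 / Real.cos (u / 2) ^ 2 * (1 / 2)))) u :=
    (Real.hasDerivAt_arctan _).comp u h3
  have h5 := h4.const_mul 2
  refine h5.congr_deriv (Eq.symm ?_)
  have hden : 0 < 1 - 2 * r * Real.cos u + r ^ 2 := by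
    nlinarith [Real.cos_le_one u, mul_pos (sub_pos.2 hr1) (sub_pos.2 hr1)]
  have hr : (1:ℝ) - r ≠ 0 := by linarith
  have hcosu : Real.cos u = 2 * Real.cos (u / 2) ^ 2 - 1 := by
    have := Real.cos_two_mul (u / 2)
    rw [show 2 * (u / 2) = u by ring] at this
    linarith
  have hsin : Real.sin (u / 2) ^ 2 = 1 - Real.cos (u / 2) ^ 2 := Real.sin_sq (u / 2)
  have expand : 1 + (c * Real.tan (u / 2)) ^ 2
      = (1 - 2 * r * Real.cos u + r ^ 2) / ((1 - r) ^ 2 * Real.cos (u / 2) ^ 2) := by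
    rw [Real.tan_eq_sin_div_cos, hc, mul_pow, div_pow, div_pow, hsin, hcosu]
    field_simp
    ring
  rw [expand, hc]
  rw [one_div_div]
  field_simp [hr, hcoshalf.ne', hden.ne']
  ring

lemma pker_integral {r : ℝ} (hr0 : 0 ≤ r) (hr1 : r < 1) :
    ∫ u in (-π)..π, pker r u = 2 * π := by
  have hc : 0 < (1 + r) / (1 - r) := by
    apply div_pos <;> linarith
  have hpi : (0:ℝ) < π := Real.pi_pos
  have hint : IntervalIntegrable (pker r) volume (-π) π :=
    (pker_cont hr0 hr1).intervalIntegrable _ _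
  have htop : Tendsto (fun u => 2 * Real.arctan ((1 + r) / (1 - r) * Real.tan (u / 2)))
      (nhdsWithin π (Iio π)) (nhds π) := by
    have h0 : Tendsto (fun u : ℝ => u / 2) (nhdsWithin π (Iio π))
        (nhdsWithin (π / 2) (Iio (π / 2))) := by
      apply tendsto_nhdsWithin_of_tendsto_nhds_of_eventually_within
      · exact ((continuous_id.div_const 2).tendsto π).mono_left nhdsWithin_le_nhds
      · filter_upwards [self_mem_nhdsWithin] with x hx
        exact mem_Iio.2 (by linarith [mem_Iio.1 hx])
    have h1 : Tendsto (fun u : ℝ => Real.tan (u / 2)) (nhdsWithin π (Iio π)) atTop :=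
      Real.tendsto_tan_pi_div_two.comp h0
    have h2 : Tendsto (fun u : ℝ => (1 + r) / (1 - r) * Real.tan (u / 2))
        (nhdsWithin π (Iio π)) atTop := h1.const_mul_atTop hc
    have h3 : Tendsto (fun u : ℝ => Real.arctan ((1 + r) / (1 - r) * Real.tan (u / 2)))
        (nhdsWithin π (Iio π)) (nhds (π / 2)) :=
      (Real.tendsto_arctan_atTop.mono_right nhdsWithin_le_nhds).comp h2
    have := h3.const_mul 2
    rw [show 2 * (π / 2) = π by ring] at this
    exact this
  have hbot : Tendsto (fun u => 2 * Real.arctan ((1 + r) / (1 - r) * Real.tan (u / 2)))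
      (nhdsWithin (-π) (Ioi (-π))) (nhds (-π)) := by
    have h0 : Tendsto (fun u : ℝ => u / 2) (nhdsWithin (-π) (Ioi (-π)))
        (nhdsWithin (-(π / 2)) (Ioi (-(π / 2)))) := by
      apply tendsto_nhdsWithin_of_tendsto_nhds_of_eventually_within
      · have := ((continuous_id.div_const 2).tendsto (-π)).mono_left
          (nhdsWithin_le_nhds (s := Ioi (-π)))
        simpa [neg_div] using this
      · filter_upwards [self_mem_nhdsWithin] with x hx
        exact mem_Ioi.2 (by linarith [mem_Ioi.1 hx])
    have h1 : Tendsto (fun u : ℝ => Real.tan (u / 2)) (nhdsWithin (-π) (Ioi (-π))) atBot :=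
      Real.tendsto_tan_neg_pi_div_two.comp h0
    have h2 : Tendsto (fun u : ℝ => (1 + r) / (1 - r) * Real.tan (u / 2))
        (nhdsWithin (-π) (Ioi (-π))) atBot := h1.const_mul_atBot hc
    have h3 : Tendsto (fun u : ℝ => Real.arctan ((1 + r) / (1 - r) * Real.tan (u / 2)))
        (nhdsWithin (-π) (Ioi (-π))) (nhds (-(π / 2))) :=
      (Real.tendsto_arctan_atBot.mono_right nhdsWithin_le_nhds).comp h2
    have := h3.const_mul 2
    rw [show 2 * -(π / 2) = -π by ring] at this
    exact this
  have := intervalIntegral.integral_eq_sub_of_hasDerivAt_of_tendsto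
    (f := fun u => 2 * Real.arctan ((1 + r) / (1 - r) * Real.tan (u / 2)))
    (f' := pker r) (by linarith : -π < π)
    (fun x hx => pker_hasDeriv hr0 hr1 hx) hint hbot htop
  rw [this]; ring

lemma shift_integrable (f : ℝ → ℝ) (hper : Function.Periodic f (2 * π))
    (hint : IntervalIntegrable f volume (-π) π) (t : ℝ) :
    IntervalIntegrable (fun u => f (u + t)) volume (-π) π := by
  have hpi : (0:ℝ) < π := Real.pi_pos
  have h2 : IntervalIntegrable f volume (-(3*π)) (-π) := by
    have := hint.comp_add_right (2 * π)
    have he : (fun x => f (x + 2 * π)) = f := funext fun x => hper x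
    rw [he] at this
    refine this.mono_set ?_
    rw [uIcc_of_le (by linarith : -(3*π) ≤ -π), uIcc_of_le (by linarith : -π - 2*π ≤ π - 2*π)]
    exact Icc_subset_Icc (by linarith) (by linarith)
  have h3 : IntervalIntegrable f volume π (3*π) := by
    have := hint.comp_sub_right (2 * π)
    have he : (fun x => f (x - 2 * π)) = f := funext fun x => hper.sub_eq x
    rw [he] at this
    refine this.mono_set ?_
    rw [uIcc_of_le (by linarith : π ≤ 3*π), uIcc_of_le (by linarith : -π + 2*π ≤ π + 2*π)]
    exact Icc_subset_Icc (by linarith) (by linarith)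
  have hbig : IntervalIntegrable f volume (-(3*π)) (3*π) := (h2.trans hint).trans h3
  set k : ℤ := ⌊(t + π) / (2 * π)⌋ with hk
  have h2pi : (0:ℝ) < 2 * π := by linarith
  have hkle : (k:ℝ) * (2*π) ≤ t + π := by
    have := (le_div_iff₀ h2pi).mp (Int.floor_le ((t + π) / (2 * π)))
    linarith [this]
  have hklt : t + π < ((k:ℝ) + 1) * (2*π) := by
    have := (div_lt_iff₀ h2pi).mp (Int.lt_floor_add_one ((t + π) / (2 * π)))
    linarith [this]
  have hsub : IntervalIntegrable f volume (t - 2*π*k - π) (t - 2*π*k + π) := by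
    apply hbig.mono_set
    rw [uIcc_of_le (by linarith), uIcc_of_le (by linarith)]
    exact Icc_subset_Icc (by nlinarith) (by nlinarith)
  have h5 := hsub.comp_sub_right (2*π*k)
  have hfe : (fun x : ℝ => f (x - 2*π*k)) = f := funext fun x => by
    have h := hper.sub_int_mul_eq (x := x) k
    rw [show x - 2*π*(k:ℝ) = x - (k:ℝ)*(2*π) by ring]
    exact h
  rw [hfe] at h5
  have h6 : IntervalIntegrable f volume (t - π) (t + π) := by
    convert h5 using 1 <;> ring
  have h7 := h6.comp_add_right t
  convert h7 using 1 <;> ring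

theorem poisson_integral_tendsto_at_continuity
    (f : ℝ → ℝ) (hper : Function.Periodic f (2 * π))
    (hint : IntervalIntegrable f volume (-π) π)
    (t : ℝ) (hcont : ContinuousAt f t) :
    Filter.Tendsto
      (fun r : ℝ => (1 / (2 * π)) *
        ∫ u in (-π)..π, f (u + t) * ((1 - r ^ 2) / (1 - 2 * r * Real.cos u + r ^ 2)))
      (nhdsWithin 1 (Set.Iio 1)) (nhds (f t)) := by
  have hpi : (0:ℝ) < π := Real.pi_pos
  have hft : IntervalIntegrable (fun u => f (u + t)) volume (-π) π :=
    shift_integrable f hper hint t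
  rw [Metric.tendsto_nhds]
  intro ε hε
  obtain ⟨δ₀, hδ₀pos, hδ₀⟩ := Metric.continuousAt_iff.mp hcont (ε/4) (by linarith)
  set δ : ℝ := min (δ₀/2) (π/2) with hδdef
  have hδpos : 0 < δ := lt_min (by linarith) (by linarith)
  have hδhalf : δ ≤ π/2 := min_le_right _ _
  have hδπ : δ < π := by linarith
  have hδbound : ∀ u : ℝ, |u| ≤ δ → |f (u + t) - f t| ≤ ε/4 := by
    intro u hu
    have h1 : dist (u + t) t < δ₀ := by
      rw [Real.dist_eq]
      simp only [add_sub_cancel_right]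
      calc |u| ≤ δ := hu
        _ ≤ δ₀/2 := min_le_left _ _
        _ < δ₀ := by linarith
    have := le_of_lt (hδ₀ h1)
    rwa [Real.dist_eq] at this
  have hcosδ : Real.cos δ < 1 := by
    have := Real.cos_lt_cos_of_nonneg_of_le_pi le_rfl hδπ.le hδpos
    simpa using this
  have hcosδ0 : 0 ≤ Real.cos δ := Real.cos_nonneg_of_mem_Icc ⟨by linarith, hδhalf⟩
  set K : ℝ := ∫ u in (-π)..π, (|f (u + t)| + |f t|) with hK
  have htail0 : Tendsto (fun r : ℝ => (1 - r^2) / (1 - Real.cos δ) * K / π)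
      (nhdsWithin 1 (Iio 1)) (nhds 0) := by
    have hco : Continuous (fun r : ℝ => (1 - r^2) / (1 - Real.cos δ) * K / π) := by
      continuity
    have := (hco.tendsto 1).mono_left (nhdsWithin_le_nhds (s := Iio 1))
    simpa using this
  have hev1 : ∀ᶠ r in nhdsWithin 1 (Iio 1),
      (1 - r^2) / (1 - Real.cos δ) * K / π < ε/2 := htail0.eventually_lt_const (by linarith)
  have hev2 : Ioo (0:ℝ) 1 ∈ nhdsWithin 1 (Iio 1) :=
    Ioo_mem_nhdsLT_of_mem (by constructor <;> norm_num)
  filter_upwards [hev1, hev2] with r hrsmall hr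
  have hr0 : 0 ≤ r := hr.1.le
  have hr1 : r < 1 := hr.2
  have hrsq : 0 < 1 - r^2 := by nlinarith [hr.1]
  set M : ℝ := (1 - r^2) / (1 - Real.cos δ) with hM
  have hMpos : 0 < M := div_pos hrsq (by linarith)
  have hPc : Continuous (pker r) := pker_cont hr0 hr1
  -- rewrite integrand via pker
  have hshow : (fun u => f (u + t) * ((1 - r ^ 2) / (1 - 2 * r * Real.cos u + r ^ 2)))
      = fun u => f (u + t) * pker r u := rfl
  rw [hshow]
  set g : ℝ → ℝ := fun u => f (u + t) - f t with hg
  have hgint : IntervalIntegrable g volume (-π) π := hft.sub intervalIntegrable_const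
  have hint1 : IntervalIntegrable (fun u => f (u + t) * pker r u) volume (-π) π :=
    hft.mul_continuousOn hPc.continuousOn
  have hint2 : IntervalIntegrable (fun u => g u * pker r u) volume (-π) π :=
    hgint.mul_continuousOn hPc.continuousOn
  have hint3 : IntervalIntegrable (fun u => f t * pker r u) volume (-π) π :=
    intervalIntegrable_const.mul_continuousOn hPc.continuousOn
  have hsplit : ∫ u in (-π)..π, f (u + t) * pker r u
      = (∫ u in (-π)..π, g u * pker r u) + f t * (2 * π) := by
    have e1 : ∀ u, f (u + t) * pker r u = g u * pker r u + f t * pker r u := by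
      intro u; simp only [hg]; ring
    rw [intervalIntegral.integral_congr (fun u _ => e1 u)]
    rw [intervalIntegral.integral_add hint2 hint3]
    rw [intervalIntegral.integral_const_mul, pker_integral hr0 hr1]
  have hdist : dist ((1 / (2 * π)) * ∫ u in (-π)..π, f (u + t) * pker r u) (f t)
      = |1 / (2 * π)| * |∫ u in (-π)..π, g u * pker r u| := by
    rw [Real.dist_eq, hsplit]
    rw [show 1 / (2 * π) * ((∫ u in (-π)..π, g u * pker r u) + f t * (2 * π)) - f t
      = 1 / (2 * π) * (∫ u in (-π)..π, g u * pker r u) by field_simp; ring]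
    rw [abs_mul]
  rw [hdist]
  -- now bound |∫ g pker|
  -- masters
  have habs : IntervalIntegrable (fun u => |g u| * pker r u) volume (-π) π :=
    hgint.abs.mul_continuousOn hPc.continuousOn
  have hh : IntervalIntegrable (fun u => |f (u + t)| + |f t|) volume (-π) π :=
    hft.abs.add intervalIntegrable_const
  have hsub1 : ∀ a b : ℝ, -π ≤ a → a ≤ b → b ≤ π →
      IntervalIntegrable (fun u => |g u| * pker r u) volume a b := by
    intro a b ha hab hb
    refine habs.mono_set ?_
    rw [uIcc_of_le hab, uIcc_of_le (by linarith)]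
    exact Icc_subset_Icc ha hb
  have hsub2 : ∀ a b : ℝ, -π ≤ a → a ≤ b → b ≤ π →
      IntervalIntegrable (fun u => |f (u + t)| + |f t|) volume a b := by
    intro a b ha hab hb
    refine hh.mono_set ?_
    rw [uIcc_of_le hab, uIcc_of_le (by linarith)]
    exact Icc_subset_Icc ha hb
  have hPint : ∀ a b : ℝ, IntervalIntegrable (pker r) volume a b :=
    fun a b => hPc.intervalIntegrable a b
  have hgabs : ∀ u, |g u| ≤ |f (u + t)| + |f t| := by
    intro u; simp only [hg]; exact abs_sub _ _
  -- split the integral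
  have hsplit3 : ∫ u in (-π)..π, |g u| * pker r u
      = (∫ u in (-π)..(-δ), |g u| * pker r u) + (∫ u in (-δ)..δ, |g u| * pker r u)
        + (∫ u in δ..π, |g u| * pker r u) := by
    rw [intervalIntegral.integral_add_adjacent_intervals
      (hsub1 _ _ le_rfl (by linarith) (by linarith))
      (hsub1 _ _ (by linarith) (by linarith) (by linarith)),
      intervalIntegral.integral_add_adjacent_intervals
      (hsub1 _ _ le_rfl (by linarith) (by linarith))
      (hsub1 _ _ (by linarith) (by linarith) le_rfl)]
  -- middle bound
  have hPsplit : (∫ u in (-π)..(-δ), pker r u) + (∫ u in (-δ)..δ, pker r u)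
      + (∫ u in δ..π, pker r u) = 2 * π := by
    rw [intervalIntegral.integral_add_adjacent_intervals (hPint (-π) (-δ)) (hPint (-δ) δ),
      intervalIntegral.integral_add_adjacent_intervals (hPint (-π) δ) (hPint δ π),
      pker_integral hr0 hr1]
  have hPnn : ∀ a b : ℝ, a ≤ b → 0 ≤ ∫ u in a..b, pker r u := by
    intro a b hab
    exact intervalIntegral.integral_nonneg hab (fun u _ => pker_nonneg hr0 hr1 u)
  have hmid : (∫ u in (-δ)..δ, |g u| * pker r u) ≤ ε/4 * (2 * π) := by
    have h1 : (∫ u in (-δ)..δ, |g u| * pker r u) ≤ ∫ u in (-δ)..δ, ε/4 * pker r u := by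
      apply intervalIntegral.integral_mono_on (by linarith)
        (hsub1 _ _ (by linarith) (by linarith) (by linarith))
        ((hPint _ _).const_mul _)
      intro u hu
      have habs_u : |u| ≤ δ := abs_le.2 ⟨hu.1, hu.2⟩
      exact mul_le_mul_of_nonneg_right (by
        have := hδbound u habs_u
        calc |g u| = |f (u + t) - f t| := rfl
          _ ≤ ε/4 := this) (pker_nonneg hr0 hr1 u)
    rw [intervalIntegral.integral_const_mul] at h1
    have h2 : (∫ u in (-δ)..δ, pker r u) ≤ 2 * π := by
      linarith [hPsplit, hPnn (-π) (-δ) (by linarith : -π ≤ -δ), hPnn δ π (by linarith : δ ≤ π)]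
    calc (∫ u in (-δ)..δ, |g u| * pker r u) ≤ ε/4 * ∫ u in (-δ)..δ, pker r u := h1
      _ ≤ ε/4 * (2 * π) := mul_le_mul_of_nonneg_left h2 (by linarith)
  -- tail pointwise bound
  have hPle : ∀ u : ℝ, δ ≤ |u| → |u| ≤ π → pker r u ≤ M := by
    intro u h1 h2
    have hcu : Real.cos u ≤ Real.cos δ := by
      have : Real.cos |u| ≤ Real.cos δ :=
        Real.cos_le_cos_of_nonneg_of_le_pi hδpos.le h2 h1
      rwa [Real.cos_abs] at this
    have hden2 : 1 - Real.cos δ ≤ 1 - 2 * r * Real.cos u + r ^ 2 := by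
      nlinarith [sq_nonneg (r - Real.cos δ), mul_nonneg hcosδ0 (by linarith : (0:ℝ) ≤ 1 - Real.cos δ), hr.1]
    rw [pker, hM, div_le_div_iff₀ (pker_denom_pos hr0 hr1 u) (by linarith)]
    nlinarith [hden2, hrsq]
  -- tail integral bounds
  have habs_eq : ∀ u : ℝ, |g u * pker r u| = |g u| * pker r u := by
    intro u
    rw [abs_mul, abs_of_nonneg (pker_nonneg hr0 hr1 u)]
  have hgP_nonneg : ∀ u : ℝ, 0 ≤ |g u| * pker r u :=
    fun u => mul_nonneg (abs_nonneg _) (pker_nonneg hr0 hr1 u)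
  have hh_nonneg : ∀ u : ℝ, 0 ≤ |f (u + t)| + |f t| :=
    fun u => add_nonneg (abs_nonneg _) (abs_nonneg _)
  have htailR : (∫ u in δ..π, |g u| * pker r u)
      ≤ (∫ u in δ..π, (|f (u + t)| + |f t|)) * M := by
    have h1 : (∫ u in δ..π, |g u| * pker r u)
        ≤ ∫ u in δ..π, (|f (u + t)| + |f t|) * M := by
      apply intervalIntegral.integral_mono_on (by linarith)
        (hsub1 _ _ (by linarith) (by linarith) le_rfl)
        ((hsub2 _ _ (by linarith) (by linarith) le_rfl).mul_const _)
      intro u hu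
      have habs_u : |u| = u := abs_of_nonneg (by linarith [hu.1])
      apply mul_le_mul (hgabs u) (hPle u (by rw [habs_u]; exact hu.1) (by rw [habs_u]; exact hu.2))
        (pker_nonneg hr0 hr1 u) (hh_nonneg u)
    rwa [intervalIntegral.integral_mul_const] at h1
  have htailL : (∫ u in (-π)..(-δ), |g u| * pker r u)
      ≤ (∫ u in (-π)..(-δ), (|f (u + t)| + |f t|)) * M := by
    have h1 : (∫ u in (-π)..(-δ), |g u| * pker r u)
        ≤ ∫ u in (-π)..(-δ), (|f (u + t)| + |f t|) * M := by
      apply intervalIntegral.integral_mono_on (by linarith)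
        (hsub1 _ _ le_rfl (by linarith) (by linarith))
        ((hsub2 _ _ le_rfl (by linarith) (by linarith)).mul_const _)
      intro u hu
      have habs_u : |u| = -u := abs_of_nonpos (by linarith [hu.2])
      apply mul_le_mul (hgabs u) (hPle u (by rw [habs_u]; linarith [hu.2]) (by rw [habs_u]; linarith [hu.1]))
        (pker_nonneg hr0 hr1 u) (hh_nonneg u)
    rwa [intervalIntegral.integral_mul_const] at h1
  have hKsplit : K = (∫ u in (-π)..(-δ), (|f (u + t)| + |f t|))
      + (∫ u in (-δ)..δ, (|f (u + t)| + |f t|)) + (∫ u in δ..π, (|f (u + t)| + |f t|)) := by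
    rw [hK]
    rw [intervalIntegral.integral_add_adjacent_intervals
      (hsub2 _ _ le_rfl (by linarith) (by linarith))
      (hsub2 _ _ (by linarith) (by linarith) (by linarith)),
      intervalIntegral.integral_add_adjacent_intervals
      (hsub2 _ _ le_rfl (by linarith) (by linarith))
      (hsub2 _ _ (by linarith) (by linarith) le_rfl)]
  have hmidh : 0 ≤ ∫ u in (-δ)..δ, (|f (u + t)| + |f t|) :=
    intervalIntegral.integral_nonneg (by linarith) (fun u _ => hh_nonneg u)
  have htails : (∫ u in (-π)..(-δ), |g u| * pker r u) + (∫ u in δ..π, |g u| * pker r u)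
      ≤ M * K := by
    have hsum : (∫ u in (-π)..(-δ), (|f (u + t)| + |f t|))
        + (∫ u in δ..π, (|f (u + t)| + |f t|)) ≤ K := by linarith [hKsplit, hmidh]
    calc (∫ u in (-π)..(-δ), |g u| * pker r u) + (∫ u in δ..π, |g u| * pker r u)
        ≤ ((∫ u in (-π)..(-δ), (|f (u + t)| + |f t|))
          + (∫ u in δ..π, (|f (u + t)| + |f t|))) * M := by linarith [htailL, htailR]
      _ ≤ K * M := mul_le_mul_of_nonneg_right hsum hMpos.le
      _ = M * K := mul_comm _ _
  -- total bound
  have hS : (∫ u in (-π)..π, |g u| * pker r u) ≤ ε/4 * (2 * π) + M * K := by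
    rw [hsplit3]; linarith [hmid, htails]
  have habsle : |∫ u in (-π)..π, g u * pker r u| ≤ ∫ u in (-π)..π, |g u| * pker r u := by
    have h1 := intervalIntegral.abs_integral_le_integral_abs
      (f := fun u => g u * pker r u) (μ := volume) (a := -π) (b := π) (by linarith)
    calc |∫ u in (-π)..π, g u * pker r u| ≤ ∫ u in (-π)..π, |g u * pker r u| := h1
      _ = ∫ u in (-π)..π, |g u| * pker r u :=
        intervalIntegral.integral_congr (fun u _ => habs_eq u)
  have hfinal : |1 / (2 * π)| * |∫ u in (-π)..π, g u * pker r u|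
      ≤ (1 / (2 * π)) * (ε/4 * (2 * π) + M * K) := by
    rw [abs_of_pos (by positivity : (0:ℝ) < 1 / (2 * π))]
    apply mul_le_mul_of_nonneg_left _ (by positivity)
    exact le_trans habsle hS
  have heq : (1 / (2 * π)) * (ε/4 * (2 * π) + M * K) = ε/4 + (M * K / π) / 2 := by
    field_simp
  have hlt : (M * K / π) / 2 < ε/4 := by linarith [hrsmall]
  calc |1 / (2 * π)| * |∫ u in (-π)..π, g u * pker r u|
      ≤ (1 / (2 * π)) * (ε/4 * (2 * π) + M * K) := hfinal
    _ = ε/4 + (M * K / π) / 2 := heq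
    _ < ε := by linarith
end

section
/- Let f : ℝ → ℝ be 2π-periodic, integrable on [-π,π], and suppose the one-sided limits f(t-0) and f(t+0) exist at a point t. Then (1/(2π)) ∫_{-π}^{π} f(u+t) · (1 - r^2)/(1 - 2r cos u + r^2) du → (f(t-0) + f(t+0))/2 as r → 1⁻. -/
open Real Filter MeasureTheory Set intervalIntegral

lemma pk_denom_pos {r : ℝ} (h0 : 0 < r) (h1 : r < 1) (u : ℝ) :
    0 < 1 - 2 * r * Real.cos u + r ^ 2 := by
  nlinarith [Real.cos_le_one u, mul_pos (sub_pos.2 h1) (sub_pos.2 h1),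
    mul_le_mul_of_nonneg_left (Real.cos_le_one u) h0.le]

lemma pk_cont {r : ℝ} (h0 : 0 < r) (h1 : r < 1) :
    Continuous (fun u => (1 - r ^ 2) / (1 - 2 * r * Real.cos u + r ^ 2)) :=
  continuous_const.div (by continuity) (fun u => (pk_denom_pos h0 h1 u).ne')

lemma pk_hasDeriv {r : ℝ} (h0 : 0 < r) (h1 : r < 1) {u : ℝ} (hu0 : 0 ≤ u) (huπ : u < π) :
    HasDerivAt (fun x : ℝ => 2 * Real.arctan ((1 + r) / (1 - r) * Real.tan (x / 2)))
      ((1 - r ^ 2) / (1 - 2 * r * Real.cos u + r ^ 2)) u := by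
  have hco : 0 < Real.cos (u / 2) :=
    Real.cos_pos_of_mem_Ioo ⟨by nlinarith [Real.pi_pos], by nlinarith⟩
  have hr : (1 : ℝ) - r ≠ 0 := by linarith
  have hden := pk_denom_pos h0 h1 u
  set c := (1 + r) / (1 - r) with hc
  have ht : HasDerivAt (fun x : ℝ => Real.tan (x / 2))
      (1 / Real.cos (u / 2) ^ 2 * (1 / 2)) u :=
    HasDerivAt.comp (h₂ := Real.tan) u (Real.hasDerivAt_tan hco.ne') ((hasDerivAt_id u).div_const 2)
  have ha := ((Real.hasDerivAt_arctan (c * Real.tan (u / 2))).comp u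
    (ht.const_mul c)).const_mul 2
  have e1 : 1 + (c * Real.tan (u / 2)) ^ 2
      = (1 - 2 * r * Real.cos u + r ^ 2) / ((1 - r) ^ 2 * Real.cos (u / 2) ^ 2) := by
    have hs : Real.sin (u / 2) ^ 2 = 1 - Real.cos (u / 2) ^ 2 := by
      nlinarith [Real.sin_sq_add_cos_sq (u / 2)]
    have hcu : Real.cos u = 2 * Real.cos (u / 2) ^ 2 - 1 := by
      have h := Real.cos_sq (u / 2)
      rw [show 2 * (u / 2) = u by ring] at h
      linarith
    rw [Real.tan_eq_sin_div_cos, hc, hcu, mul_pow, div_pow, div_pow, hs]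
    field_simp
    ring
  refine ha.congr_deriv ?_
  rw [e1, hc]
  field_simp
  ring

lemma pk_integral {r : ℝ} (h0 : 0 < r) (h1 : r < 1) {a : ℝ} (ha0 : 0 ≤ a) (haπ : a < π) :
    ∫ u in (0:ℝ)..a, (1 - r ^ 2) / (1 - 2 * r * Real.cos u + r ^ 2)
      = 2 * Real.arctan ((1 + r) / (1 - r) * Real.tan (a / 2)) := by
  have h := intervalIntegral.integral_eq_sub_of_hasDerivAt
    (f := fun x : ℝ => 2 * Real.arctan ((1 + r) / (1 - r) * Real.tan (x / 2)))
    (f' := fun u => (1 - r ^ 2) / (1 - 2 * r * Real.cos u + r ^ 2))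
    (fun x hx => by
      rw [Set.uIcc_of_le ha0] at hx
      exact pk_hasDeriv h0 h1 hx.1 (lt_of_le_of_lt hx.2 haπ))
    ((pk_cont h0 h1).intervalIntegrable 0 a)
  rw [h]
  norm_num

lemma pk_mass_le {r : ℝ} (h0 : 0 < r) (h1 : r < 1) {a : ℝ} (ha0 : 0 ≤ a) (haπ : a < π) :
    ∫ u in (0:ℝ)..a, (1 - r ^ 2) / (1 - 2 * r * Real.cos u + r ^ 2) ≤ π := by
  rw [pk_integral h0 h1 ha0 haπ]
  have := Real.arctan_lt_pi_div_two ((1 + r) / (1 - r) * Real.tan (a / 2))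
  linarith

lemma pk_mass_tendsto {δ : ℝ} (hδ0 : 0 < δ) (hδπ : δ < π) :
    Tendsto (fun r : ℝ => 2 * Real.arctan ((1 + r) / (1 - r) * Real.tan (δ / 2)))
      (nhdsWithin 1 (Set.Iio 1)) (nhds π) := by
  have htan : 0 < Real.tan (δ / 2) :=
    Real.tan_pos_of_pos_of_lt_pi_div_two (by linarith) (by linarith)
  have h1 : Tendsto (fun r : ℝ => 1 - r) (nhdsWithin 1 (Set.Iio 1)) (nhdsWithin 0 (Set.Ioi 0)) := by
    apply tendsto_nhdsWithin_of_tendsto_nhds_of_eventually_within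
    · have : Tendsto (fun r : ℝ => 1 - r) (nhds 1) (nhds 0) := by
        exact ((continuous_const (y := (1:ℝ))).sub continuous_id).tendsto' (1:ℝ) 0 (by simp)
      exact this.mono_left nhdsWithin_le_nhds
    · filter_upwards [self_mem_nhdsWithin] with r hr
      simp only [Set.mem_Iio] at hr
      simp only [Set.mem_Ioi]
      linarith
  have h2 : Tendsto (fun r : ℝ => (1 + r) * (1 - r)⁻¹) (nhdsWithin 1 (Set.Iio 1)) atTop := by
    apply Filter.Tendsto.pos_mul_atTop (show (0:ℝ) < 2 by norm_num)
    · have : Tendsto (fun r : ℝ => 1 + r) (nhds 1) (nhds 2) := by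
        have := ((continuous_const (y := (1:ℝ))).add continuous_id).tendsto (1:ℝ)
        norm_num at this; exact this
      exact this.mono_left nhdsWithin_le_nhds
    · exact tendsto_inv_nhdsGT_zero.comp h1
  have h3 : Tendsto (fun r : ℝ => (1 + r) / (1 - r) * Real.tan (δ / 2))
      (nhdsWithin 1 (Set.Iio 1)) atTop := by
    simp only [div_eq_mul_inv]
    exact h2.atTop_mul_const htan
  have h4 := (Real.tendsto_arctan_atTop.mono_right nhdsWithin_le_nhds).comp h3
  have h5 := h4.const_mul (2:ℝ)
  norm_num at h5
  convert h5 using 2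
  ring

lemma pk_tail_tendsto {δ : ℝ} (hδ0 : 0 < δ) (hδπ : δ < π) :
    Tendsto (fun r : ℝ => (1 - r ^ 2) / (1 - 2 * r * Real.cos δ + r ^ 2))
      (nhdsWithin 1 (Set.Iio 1)) (nhds 0) := by
  have hc : Real.cos δ < 1 := by
    have := Real.cos_lt_cos_of_nonneg_of_le_pi le_rfl hδπ.le hδ0
    simpa using this
  have hden : (1:ℝ) - 2 * 1 * Real.cos δ + 1 ^ 2 ≠ 0 := by nlinarith
  have h1 : Tendsto (fun r : ℝ => (1 - r ^ 2) / (1 - 2 * r * Real.cos δ + r ^ 2)) (nhds 1)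
      (nhds ((1 - 1 ^ 2) / (1 - 2 * 1 * Real.cos δ + 1 ^ 2))) := by
    apply Filter.Tendsto.div
    · exact (by continuity : Continuous fun r : ℝ => 1 - r ^ 2).tendsto 1
    · exact (by continuity : Continuous fun r : ℝ => 1 - 2 * r * Real.cos δ + r ^ 2).tendsto 1
    · exact hden
  have h2 : ((1:ℝ) - 1 ^ 2) / (1 - 2 * 1 * Real.cos δ + 1 ^ 2) = 0 := by norm_num
  rw [h2] at h1
  exact h1.mono_left nhdsWithin_le_nhds

lemma poisson_aux (g : ℝ → ℝ) (hg : IntervalIntegrable g volume 0 π) (L : ℝ)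
    (hlim : Tendsto g (nhdsWithin 0 (Set.Ioi 0)) (nhds L)) :
    Tendsto (fun r : ℝ => (1 / (2 * π)) * ∫ u in (0:ℝ)..π,
        g u * ((1 - r ^ 2) / (1 - 2 * r * Real.cos u + r ^ 2)))
      (nhdsWithin 1 (Set.Iio 1)) (nhds (L / 2)) := by
  have hπ := Real.pi_pos
  rw [Metric.tendsto_nhds]
  intro ε hε
  obtain ⟨δ₀, hδ₀, hδ₀'⟩ := Metric.tendsto_nhdsWithin_nhds.1 hlim (ε / 2) (by linarith)
  set δ := min δ₀ π / 2 with hδdef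
  have hminpos : 0 < min δ₀ π := lt_min hδ₀ hπ
  have hδ0 : 0 < δ := by positivity
  have hδπ : δ < π := by
    have := min_le_right δ₀ π; rw [hδdef]; linarith
  have hδδ₀ : δ < δ₀ := by
    have := min_le_left δ₀ π; rw [hδdef]; linarith
  have hgbound : ∀ u, 0 < u → u ≤ δ → |g u - L| ≤ ε / 2 := by
    intro u h1 h2
    have := hδ₀' (Set.mem_Ioi.2 h1) (by rw [Real.dist_eq, sub_zero, abs_of_pos h1]; linarith)
    rw [Real.dist_eq] at this
    exact this.le
  set C := ∫ u in δ..π, |g u| with hC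
  have hC0 : 0 ≤ C :=
    intervalIntegral.integral_nonneg hδπ.le fun u _ => abs_nonneg _
  have ev1 : ∀ᶠ r : ℝ in nhdsWithin 1 (Set.Iio 1), 0 < r :=
    eventually_nhdsWithin_of_eventually_nhds (eventually_gt_nhds (by norm_num))
  have ev2 : ∀ᶠ r : ℝ in nhdsWithin 1 (Set.Iio 1), r < 1 :=
    eventually_mem_nhdsWithin
  have ev3 := Metric.tendsto_nhds.1 ((pk_tail_tendsto hδ0 hδπ).mul_const C)
    (π / 2 * ε) (by positivity)
  have ev4 := Metric.tendsto_nhds.1 (pk_mass_tendsto hδ0 hδπ)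
    (π / 2 * ε / (|L| + 1)) (by positivity)
  filter_upwards [ev1, ev2, ev3, ev4] with r h0r h1r h3 h4
  set P : ℝ → ℝ := fun u => (1 - r ^ 2) / (1 - 2 * r * Real.cos u + r ^ 2) with hP
  have Pc : Continuous P := pk_cont h0r h1r
  have Pnn : ∀ u, 0 ≤ P u := fun u =>
    div_nonneg (by nlinarith) (pk_denom_pos h0r h1r u).le
  have hsub1 : Set.uIcc (0:ℝ) δ ⊆ Set.uIcc (0:ℝ) π := by
    rw [Set.uIcc_of_le hδ0.le, Set.uIcc_of_le hπ.le]
    exact Set.Icc_subset_Icc le_rfl hδπ.le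
  have hsub2 : Set.uIcc δ π ⊆ Set.uIcc (0:ℝ) π := by
    rw [Set.uIcc_of_le hδπ.le, Set.uIcc_of_le hπ.le]
    exact Set.Icc_subset_Icc hδ0.le le_rfl
  have hg1 : IntervalIntegrable g volume 0 δ := hg.mono_set hsub1
  have hg2 : IntervalIntegrable g volume δ π := hg.mono_set hsub2
  have int1 : IntervalIntegrable (fun u => g u * P u) volume 0 δ :=
    hg1.mul_continuousOn Pc.continuousOn
  have int2 : IntervalIntegrable (fun u => g u * P u) volume δ π :=
    hg2.mul_continuousOn Pc.continuousOn
  have int1' : IntervalIntegrable (fun u => (g u - L) * P u) volume 0 δ :=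
    (hg1.sub (intervalIntegrable_const)).mul_continuousOn Pc.continuousOn
  have intP : IntervalIntegrable P volume 0 δ := Pc.intervalIntegrable 0 δ
  set A := ∫ u in (0:ℝ)..δ, P u with hA
  have hAeq : A = 2 * Real.arctan ((1 + r) / (1 - r) * Real.tan (δ / 2)) :=
    pk_integral h0r h1r hδ0.le hδπ
  have hAle : A ≤ π := pk_mass_le h0r h1r hδ0.le hδπ
  have hAnn : 0 ≤ A := intervalIntegral.integral_nonneg hδ0.le fun u _ => Pnn u
  set I1 := ∫ u in (0:ℝ)..δ, (g u - L) * P u with hI1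
  set I2 := ∫ u in δ..π, g u * P u with hI2
  have hsplit : (∫ u in (0:ℝ)..π, g u * P u) = I1 + L * A + I2 := by
    rw [← intervalIntegral.integral_add_adjacent_intervals int1 int2]
    congr 1
    have e : ∀ u : ℝ, g u * P u = (g u - L) * P u + L * P u := fun u => by ring
    rw [intervalIntegral.integral_congr (fun u _ => e u),
      intervalIntegral.integral_add int1' (intP.const_mul L),
      intervalIntegral.integral_const_mul]
  -- bound I1
  have hI1bound : |I1| ≤ ε / 2 * π := by
    have h0ae' : ∀ᵐ u : ℝ ∂(volume : Measure ℝ), u ≠ 0 := by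
      have h00 : (volume : Measure ℝ) {0} = 0 := measure_singleton 0
      rw [MeasureTheory.ae_iff]
      simpa using h00
    have h0ae : ∀ᵐ u : ℝ ∂(volume.restrict (Set.Icc 0 δ)), u ≠ 0 :=
      ae_restrict_of_ae h0ae'
    have hmem : ∀ᵐ u : ℝ ∂(volume.restrict (Set.Icc 0 δ)), u ∈ Set.Icc 0 δ :=
      ae_restrict_mem measurableSet_Icc
    calc |I1| ≤ ∫ u in (0:ℝ)..δ, |(g u - L) * P u| :=
          intervalIntegral.abs_integral_le_integral_abs hδ0.le
      _ ≤ ∫ u in (0:ℝ)..δ, ε / 2 * P u := by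
          apply intervalIntegral.integral_mono_ae_restrict hδ0.le int1'.abs
            (intP.const_mul _)
          filter_upwards [h0ae, hmem] with u hu0 hu
          rw [abs_mul, abs_of_nonneg (Pnn u)]
          exact mul_le_mul_of_nonneg_right
            (hgbound u (lt_of_le_of_ne hu.1 (Ne.symm hu0)) hu.2) (Pnn u)
      _ = ε / 2 * A := intervalIntegral.integral_const_mul _ _
      _ ≤ ε / 2 * π := by nlinarith
  -- bound I2
  have hI2bound : |I2| ≤ P δ * C := by
    calc |I2| ≤ ∫ u in δ..π, |g u * P u| :=
          intervalIntegral.abs_integral_le_integral_abs hδπ.le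
      _ ≤ ∫ u in δ..π, |g u| * P δ := by
          apply intervalIntegral.integral_mono_on hδπ.le int2.abs
            (hg2.abs.mul_const _)
          intro u hu
          rw [abs_mul, abs_of_nonneg (Pnn u)]
          apply mul_le_mul_of_nonneg_left _ (abs_nonneg _)
          apply div_le_div_of_nonneg_left (by nlinarith) (pk_denom_pos h0r h1r δ)
          have hcos : Real.cos u ≤ Real.cos δ :=
            Real.cos_le_cos_of_nonneg_of_le_pi hδ0.le hu.2 hu.1
          nlinarith
      _ = C * P δ := intervalIntegral.integral_mul_const _ _
      _ = P δ * C := mul_comm _ _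
  -- bound L term
  have hLbound : |L * (A - π)| < π / 2 * ε := by
    rw [abs_mul]
    rw [Real.dist_eq] at h4
    rw [hAeq] at *
    have hL1 : (0:ℝ) < |L| + 1 := by positivity
    calc |L| * |2 * Real.arctan ((1 + r) / (1 - r) * Real.tan (δ / 2)) - π|
        ≤ (|L| + 1) * |2 * Real.arctan ((1 + r) / (1 - r) * Real.tan (δ / 2)) - π| := by
          apply mul_le_mul_of_nonneg_right (by linarith) (abs_nonneg _)
      _ < (|L| + 1) * (π / 2 * ε / (|L| + 1)) := by
          exact mul_lt_mul_of_pos_left h4 hL1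
      _ = π / 2 * ε := by field_simp
  have hPδC : P δ * C < π / 2 * ε := by
    rw [Real.dist_eq, zero_mul, sub_zero] at h3
    exact (le_abs_self _).trans_lt h3
  -- final
  rw [Real.dist_eq, hsplit]
  have e2 : 1 / (2 * π) * (I1 + L * A + I2) - L / 2
      = 1 / (2 * π) * (I1 + I2 + L * (A - π)) := by
    field_simp
    ring
  rw [e2, abs_mul, abs_of_nonneg (by positivity : (0:ℝ) ≤ 1 / (2 * π))]
  have htri : |I1 + I2 + L * (A - π)| ≤ |I1| + |I2| + |L * (A - π)| :=
    (abs_add_le _ _).trans (by gcongr; exact abs_add_le _ _)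
  have hS : |I1 + I2 + L * (A - π)| < ε / 2 * π + π / 2 * ε + π / 2 * ε := by
    have := hI2bound.trans_lt hPδC
    linarith
  calc 1 / (2 * π) * |I1 + I2 + L * (A - π)|
      < 1 / (2 * π) * (ε / 2 * π + π / 2 * ε + π / 2 * ε) := by
        apply mul_lt_mul_of_pos_left hS (by positivity)
    _ = 3 / 4 * ε := by field_simp; ring
    _ < ε := by linarith

private lemma II_congr {f : ℝ → ℝ} {a b c d : ℝ} (h : IntervalIntegrable f volume a b)
    (hc : c = a) (hd : d = b) : IntervalIntegrable f volume c d := by rw [hc, hd]; exact h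

lemma periodic_II_all (f : ℝ → ℝ) (hper : Function.Periodic f (2 * π))
    (hint : IntervalIntegrable f volume (-π) π) (a b : ℝ) :
    IntervalIntegrable f volume a b := by
  have hπ := Real.pi_pos
  have base : ∀ n : ℤ, IntervalIntegrable f volume (-π + n * (2 * π)) (π + n * (2 * π)) := by
    intro n
    have h := hint.comp_add_right (-(n * (2 * π)))
    have hfun : (fun x : ℝ => f (x + -(n * (2 * π)))) = f := by
      funext x
      rw [← sub_eq_add_neg]
      exact hper.sub_int_mul_eq n
    rw [hfun] at h
    exact II_congr h (by ring) (by ring)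
  have J : ∀ n : ℕ, IntervalIntegrable f volume (-π - n * (2 * π)) (π + n * (2 * π)) := by
    intro n
    induction n with
    | zero => simpa using base 0
    | succ n ih =>
      have l' : IntervalIntegrable f volume (-π - (n + 1 : ℕ) * (2 * π)) (-π - n * (2 * π)) :=
        II_congr (base (-(n + 1 : ℕ))) (by push_cast; ring) (by push_cast; ring)
      have r' : IntervalIntegrable f volume (π + n * (2 * π)) (π + (n + 1 : ℕ) * (2 * π)) :=
        II_congr (base ((n + 1 : ℕ))) (by push_cast; ring) (by push_cast; ring)
      exact (l'.trans ih).trans r'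
  obtain ⟨n, hn⟩ := exists_nat_gt (|a| + |b|)
  have hlo : -π - n * (2 * π) ≤ min a b := by
    have h1 := neg_abs_le a
    have h2 := neg_abs_le b
    rcases min_choice a b with h | h <;> rw [h] <;>
      nlinarith [Real.pi_gt_three, Nat.cast_nonneg (α := ℝ) n, abs_nonneg a, abs_nonneg b]
  have hhi : max a b ≤ π + n * (2 * π) := by
    have h1 := le_abs_self a
    have h2 := le_abs_self b
    rcases max_choice a b with h | h <;> rw [h] <;>
      nlinarith [Real.pi_gt_three, Nat.cast_nonneg (α := ℝ) n, abs_nonneg a, abs_nonneg b]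
  apply (J n).mono_set
  rw [Set.uIcc_of_le (by nlinarith [Real.pi_gt_three, Nat.cast_nonneg (α := ℝ) n] :
    -π - n * (2 * π) ≤ π + n * (2 * π))]
  intro x hx
  rcases Set.mem_uIcc.1 hx with ⟨h1, h2⟩ | ⟨h1, h2⟩
  · exact ⟨hlo.trans ((min_le_left a b).trans h1), h2.trans ((le_max_right a b).trans hhi)⟩
  · exact ⟨hlo.trans ((min_le_right a b).trans h1), h2.trans ((le_max_left a b).trans hhi)⟩

theorem poisson_integral_tendsto_at_jump
    (f : ℝ → ℝ) (hper : Function.Periodic f (2 * π))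
    (hint : IntervalIntegrable f volume (-π) π)
    (t Lm Lp : ℝ)
    (hleft : Filter.Tendsto f (nhdsWithin t (Set.Iio t)) (nhds Lm))
    (hright : Filter.Tendsto f (nhdsWithin t (Set.Ioi t)) (nhds Lp)) :
    Filter.Tendsto
      (fun r : ℝ => (1 / (2 * π)) *
        ∫ u in (-π)..π, f (u + t) * ((1 - r ^ 2) / (1 - 2 * r * Real.cos u + r ^ 2)))
      (nhdsWithin 1 (Set.Iio 1)) (nhds ((Lm + Lp) / 2)) := by
  have hπ := Real.pi_pos
  have hg1int : IntervalIntegrable (fun u => f (u + t)) volume 0 π :=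
    II_congr ((periodic_II_all f hper hint t (π + t)).comp_add_right t) (by ring) (by ring)
  have hg1int' : IntervalIntegrable (fun u => f (u + t)) volume (-π) 0 :=
    II_congr ((periodic_II_all f hper hint (-π + t) t).comp_add_right t) (by ring) (by ring)
  have hg2int : IntervalIntegrable (fun u => f (t - u)) volume 0 π :=
    II_congr ((periodic_II_all f hper hint t (t - π)).comp_sub_left t) (by ring) (by ring)
  have hmap1 : Tendsto (fun u : ℝ => u + t) (nhdsWithin 0 (Set.Ioi 0))
      (nhdsWithin t (Set.Ioi t)) := by
    apply tendsto_nhdsWithin_of_tendsto_nhds_of_eventually_within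
    · have h : Tendsto (fun u : ℝ => u + t) (nhds 0) (nhds t) := by
        exact (continuous_id.add (continuous_const (y := t))).tendsto' (0 : ℝ) t (by simp)
      exact h.mono_left nhdsWithin_le_nhds
    · filter_upwards [self_mem_nhdsWithin] with u hu
      simp only [Set.mem_Ioi] at hu ⊢
      linarith
  have hmap2 : Tendsto (fun u : ℝ => t - u) (nhdsWithin 0 (Set.Ioi 0))
      (nhdsWithin t (Set.Iio t)) := by
    apply tendsto_nhdsWithin_of_tendsto_nhds_of_eventually_within
    · have h : Tendsto (fun u : ℝ => t - u) (nhds 0) (nhds t) := by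
        exact ((continuous_const (y := t)).sub continuous_id).tendsto' (0 : ℝ) t (by simp)
      exact h.mono_left nhdsWithin_le_nhds
    · filter_upwards [self_mem_nhdsWithin] with u hu
      simp only [Set.mem_Ioi] at hu
      simp only [Set.mem_Iio]
      linarith
  have hlim1 : Tendsto (fun u => f (u + t)) (nhdsWithin 0 (Set.Ioi 0)) (nhds Lp) :=
    hright.comp hmap1
  have hlim2 : Tendsto (fun u => f (t - u)) (nhdsWithin 0 (Set.Ioi 0)) (nhds Lm) :=
    hleft.comp hmap2
  have ev1 : ∀ᶠ r : ℝ in nhdsWithin 1 (Set.Iio 1), 0 < r :=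
    eventually_nhdsWithin_of_eventually_nhds (eventually_gt_nhds (by norm_num))
  have ev2 : ∀ᶠ r : ℝ in nhdsWithin 1 (Set.Iio 1), r < 1 := eventually_mem_nhdsWithin
  have key : (fun r : ℝ =>
        (1 / (2 * π)) * (∫ u in (0:ℝ)..π, f (t - u) * ((1 - r ^ 2) / (1 - 2 * r * Real.cos u + r ^ 2)))
        + (1 / (2 * π)) * (∫ u in (0:ℝ)..π, f (u + t) * ((1 - r ^ 2) / (1 - 2 * r * Real.cos u + r ^ 2))))
      =ᶠ[nhdsWithin 1 (Set.Iio 1)]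
      (fun r : ℝ => (1 / (2 * π)) *
        ∫ u in (-π)..π, f (u + t) * ((1 - r ^ 2) / (1 - 2 * r * Real.cos u + r ^ 2))) := by
    filter_upwards [ev1, ev2] with r h0r h1r
    have Pc := pk_cont h0r h1r
    have i1 : IntervalIntegrable
        (fun u => f (u + t) * ((1 - r ^ 2) / (1 - 2 * r * Real.cos u + r ^ 2))) volume (-π) 0 :=
      hg1int'.mul_continuousOn Pc.continuousOn
    have i2 : IntervalIntegrable
        (fun u => f (u + t) * ((1 - r ^ 2) / (1 - 2 * r * Real.cos u + r ^ 2))) volume 0 π :=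
      hg1int.mul_continuousOn Pc.continuousOn
    have flip : (∫ u in (0:ℝ)..π, f (t - u) * ((1 - r ^ 2) / (1 - 2 * r * Real.cos u + r ^ 2)))
        = ∫ u in (-π)..0, f (u + t) * ((1 - r ^ 2) / (1 - 2 * r * Real.cos u + r ^ 2)) := by
      have h := intervalIntegral.integral_comp_neg (a := (0:ℝ)) (b := π)
        (fun x => f (x + t) * ((1 - r ^ 2) / (1 - 2 * r * Real.cos x + r ^ 2)))
      rw [neg_zero] at h
      rw [← h]
      apply intervalIntegral.integral_congr
      intro u _
      simp only [Real.cos_neg]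
      rw [show t - u = -u + t by ring]
    rw [flip, ← mul_add, intervalIntegral.integral_add_adjacent_intervals i1 i2]
  have h := (poisson_aux (fun u => f (t - u)) hg2int Lm hlim2).add
    (poisson_aux (fun u => f (u + t)) hg1int Lp hlim1)
  rw [show Lm / 2 + Lp / 2 = (Lm + Lp) / 2 by ring] at h
  exact h.congr' key
end

section
/- Let f : ℝ → ℝ be continuous and 2π-periodic with Fourier coefficients a_0, a_k, b_k, and let 0 < α < π/2. Then for all t, a_0/2 + Σ_{k=1}^∞ (sinc(kα/2))^2 (a_k cos(kt) + b_k sin(kt)) = (1/α^2) ∫_{-α}^{α} f(t+u)(α - |u|) du. -/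
open Real


lemma hasSum_cos_div_sq {y : ℝ} (h0 : 0 ≤ y) (h1 : y ≤ 2 * π) :
    HasSum (fun k : ℕ => Real.cos ((k + 1) * y) / (k + 1) ^ 2)
      (y ^ 2 / 4 - π * y / 2 + π ^ 2 / 6) := by
  have hπ := Real.pi_pos
  have hx : y / (2 * π) ∈ Set.Icc (0 : ℝ) 1 := by
    constructor
    · positivity
    · rw [div_le_one (by positivity)]; exact h1
  have H := hasSum_one_div_nat_pow_mul_cos (k := 1) one_ne_zero hx
  have H2 := (hasSum_nat_add_iff' (f := fun n : ℕ =>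
      1 / (n : ℝ) ^ (2 * 1) * Real.cos (2 * π * n * (y / (2 * π)))) 1).mpr H
  simp only [Finset.range_one, Finset.sum_singleton] at H2
  have hb2 : (Polynomial.map (algebraMap ℚ ℝ) (Polynomial.bernoulli 2)).eval (y / (2*π))
      = (y/(2*π))^2 - (y/(2*π)) + 1/6 := by
    simp [Polynomial.bernoulli, Finset.sum_range_succ, bernoulli, bernoulli'_two,
      bernoulli'_one, bernoulli'_zero]
    ring
  convert H2 using 1
  · rfl
  · funext k
    push_cast
    rw [show 2 * π * (↑k + 1) * (y / (2 * π)) = (↑k + 1) * y by field_simp]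
    ring
  · rw [show (2:ℕ)*1 = 2 from rfl] at H2 ⊢
    rw [hb2]
    norm_num [Nat.factorial]
    field_simp
    ring

lemma hasSum_cos_div_sq' {y : ℝ} (h : |y| ≤ 2 * π) :
    HasSum (fun k : ℕ => Real.cos ((k + 1) * y) / (k + 1) ^ 2)
      (|y| ^ 2 / 4 - π * |y| / 2 + π ^ 2 / 6) := by
  rcases abs_cases y with ⟨hy, _⟩ | ⟨hy, hneg⟩
  · rw [hy] at h ⊢; exact hasSum_cos_div_sq (hy ▸ abs_nonneg y) h
  · rw [hy] at h ⊢
    have := hasSum_cos_div_sq (by linarith) h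
    convert this using 2 with k
    rw [mul_neg, Real.cos_neg]


noncomputable def sinc (x : ℝ) : ℝ := if x = 0 then 1 else Real.sin x / x


/-- The kernel identity. -/
lemma kernel_hasSum {α : ℝ} (hα0 : 0 < α) (hαπ : α < π / 2) {v : ℝ} (hv : |v| ≤ π) :
    HasSum (fun k : ℕ => (_root_.sinc ((k + 1) * α / 2)) ^ 2 * Real.cos ((k + 1) * v))
      ((π / α ^ 2) * max (α - |v|) 0 - 1 / 2) := by
  have hπ := Real.pi_pos
  have h1 : |v| ≤ 2 * π := by linarith
  have hv' := abs_le.mp hv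
  have h2 : |v + α| ≤ 2 * π := by
    rw [abs_le]; constructor <;> [linarith [hv'.1]; linarith [hv'.2]]
  have h3 : |v - α| ≤ 2 * π := by
    rw [abs_le]; constructor <;> [linarith [hv'.1]; linarith [hv'.2]]
  have H := (((hasSum_cos_div_sq' h1).mul_left 2).sub (hasSum_cos_div_sq' h2)).sub
    (hasSum_cos_div_sq' h3)
  have H2 := H.mul_left (1 / α ^ 2)
  convert H2 using 1
  · rfl
  · funext k
    have hK : ((k : ℝ) + 1) * α / 2 ≠ 0 := by positivity
    have hs : _root_.sinc ((k + 1) * α / 2) = Real.sin ((k + 1) * α / 2) / ((k + 1) * α / 2) := by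
      rw [_root_.sinc, if_neg hK]
    rw [hs]
    have hsin : Real.sin (((k:ℝ) + 1) * α / 2) ^ 2 = (1 - Real.cos (((k:ℝ)+1) * α)) / 2 := by
      have h2m := Real.cos_two_mul (((k:ℝ)+1) * α / 2)
      have hsc := Real.sin_sq_add_cos_sq (((k:ℝ)+1) * α / 2)
      rw [show 2 * (((k:ℝ)+1) * α / 2) = ((k:ℝ)+1) * α by ring] at h2m
      nlinarith
    have hprod : Real.cos (((k:ℝ)+1) * α) * Real.cos (((k:ℝ)+1) * v)
        = (Real.cos (((k:ℝ)+1) * (v + α)) + Real.cos (((k:ℝ)+1) * (v - α))) / 2 := by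
      rw [mul_add, mul_sub, Real.cos_add, Real.cos_sub]
      ring
    rw [div_pow, hsin]
    field_simp
    nlinarith [hprod]
  · -- value identity
    rcases le_total 0 v with hv0 | hv0
    · rw [abs_of_nonneg hv0]
      rw [abs_of_nonneg (by linarith : (0:ℝ) ≤ v + α)]
      rcases le_total α v with hc | hc
      · rw [abs_of_nonneg (by linarith), max_eq_right (by linarith)]
        field_simp; ring
      · rw [abs_of_nonpos (by linarith), max_eq_left (by linarith)]
        field_simp; ring
    · rw [abs_of_nonpos hv0]
      rw [abs_of_nonpos (by linarith : v - α ≤ 0)]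
      rcases le_total (-α) v with hc | hc
      · rw [abs_of_nonneg (by linarith), max_eq_left (by linarith)]
        field_simp; ring
      · rw [abs_of_nonpos (by linarith), max_eq_right (by linarith)]
        field_simp; ring


lemma integral_shift {f : ℝ → ℝ} (hf : Continuous f) (hper : Function.Periodic f (2*π))
    (t : ℝ) (K : ℕ) :
    ∫ u in (-π)..π, f u * Real.cos (K * (u - t)) = ∫ v in (-π)..π, f (t + v) * Real.cos (K * v) := by
  have hper2 : Function.Periodic (fun u => f u * Real.cos (K * (u - t))) (2*π) := by
    intro u
    simp only [hper u]
    congr 1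
    rw [show (K:ℝ) * (u + 2*π - t) = K * (u - t) + K * (2*π) by ring,
      Real.cos_add_nat_mul_two_pi]
  have h1 := hper2.intervalIntegral_add_eq (-π) (t - π)
  rw [show -π + 2*π = π by ring, show t - π + (2*π) = t + π by ring] at h1
  rw [h1]
  have h2 := intervalIntegral.integral_comp_add_left
    (fun u => f u * Real.cos (K * (u - t))) t (a := -π) (b := π)
  rw [show t + -π = t - π from by ring] at h2
  rw [← h2]
  apply intervalIntegral.integral_congr
  intro v _
  simp only
  congr 2
  ring

lemma coeff_eq {f : ℝ → ℝ} (hf : Continuous f) (hper : Function.Periodic f (2*π))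
    {a b : ℕ → ℝ}
    (ha : ∀ k : ℕ, a k = (1 / π) * ∫ u in (-π)..π, f u * Real.cos (k * u))
    (hb : ∀ k : ℕ, b k = (1 / π) * ∫ u in (-π)..π, f u * Real.sin (k * u))
    (t : ℝ) (K : ℕ) :
    a K * Real.cos (K * t) + b K * Real.sin (K * t)
      = (1/π) * ∫ v in (-π)..π, f (t + v) * Real.cos (K * v) := by
  rw [← integral_shift hf hper t K, ha, hb]
  have e1 : ∫ u in (-π)..π, f u * Real.cos (K * (u - t))
      = (∫ u in (-π)..π, (f u * Real.cos (K * u)) * Real.cos (K * t))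
        + ∫ u in (-π)..π, (f u * Real.sin (K * u)) * Real.sin (K * t) := by
    rw [← intervalIntegral.integral_add
      (f := fun u => f u * Real.cos (K * u) * Real.cos (K * t))
      (g := fun u => f u * Real.sin (K * u) * Real.sin (K * t))
      (((hf.mul (by continuity)).mul continuous_const).intervalIntegrable _ _)
      (((hf.mul (by continuity)).mul continuous_const).intervalIntegrable _ _)]
    congr 1
    ext u
    rw [show (K:ℝ) * (u - t) = K * u - K * t by ring, Real.cos_sub]
    ring
  rw [e1, intervalIntegral.integral_mul_const, intervalIntegral.integral_mul_const]
  ring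

theorem sigma_two_sum_eq_hat_convolution
    (f : ℝ → ℝ) (hf : Continuous f) (hper : Function.Periodic f (2 * π))
    (a b : ℕ → ℝ)
    (ha : ∀ k : ℕ, a k = (1 / π) * ∫ u in (-π)..π, f u * Real.cos (k * u))
    (hb : ∀ k : ℕ, b k = (1 / π) * ∫ u in (-π)..π, f u * Real.sin (k * u))
    (α : ℝ) (hα0 : 0 < α) (hαπ : α < π / 2) (t : ℝ) :
    HasSum (fun k : ℕ =>
        (_root_.sinc ((k + 1) * α / 2)) ^ 2 *
          (a (k + 1) * Real.cos ((k + 1) * t) + b (k + 1) * Real.sin ((k + 1) * t)))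
      ((1 / α ^ 2) * (∫ u in (-α)..α, f (t + u) * (α - |u|)) - a 0 / 2) := by
  have hπ := Real.pi_pos
  have hft : Continuous fun v => f (t + v) := hf.comp (continuous_const.add continuous_id)
  set F : ℕ → ℝ → ℝ := fun k v =>
    f (t + v) * ((_root_.sinc ((k + 1) * α / 2)) ^ 2 * Real.cos ((k + 1) * v)) with hFdef
  have hFcont : ∀ k, Continuous (F k) := fun k =>
    hft.mul (continuous_const.mul (by continuity))
  -- bound on f
  obtain ⟨M, hM⟩ := (isCompact_Icc (a := t - π) (b := t + π)).exists_bound_of_continuousOn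
    hf.continuousOn
  have hM0 : 0 ≤ M := le_trans (norm_nonneg _) (hM t (by constructor <;> linarith))
  -- sinc bound
  have hsinc : ∀ k : ℕ, (_root_.sinc (((k:ℝ) + 1) * α / 2)) ^ 2 ≤ 4 / (α ^ 2 * ((k:ℝ) + 1) ^ 2) := by
    intro k
    have hK : ((k : ℝ) + 1) * α / 2 ≠ 0 := by positivity
    rw [_root_.sinc, if_neg hK, div_pow]
    have h1 : Real.sin (((k:ℝ) + 1) * α / 2) ^ 2 ≤ 1 := by
      have := Real.neg_one_le_sin (((k:ℝ) + 1) * α / 2)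
      have := Real.sin_le_one (((k:ℝ) + 1) * α / 2)
      nlinarith
    have h2 : (((k:ℝ) + 1) * α / 2) ^ 2 = α ^ 2 * ((k:ℝ) + 1) ^ 2 / 4 := by ring
    rw [h2]
    rw [div_le_div_iff₀ (by positivity) (by positivity)]
    nlinarith [sq_nonneg (Real.sin (((k:ℝ) + 1) * α / 2))]
  have hint : ∀ k, MeasureTheory.IntegrableOn (F k) (Set.Ioc (-π) π) := fun k =>
    (hFcont k).integrableOn_Ioc
  -- summability of integral norms
  have hF_sum : Summable fun k => ∫ v in Set.Ioc (-π) π, ‖F k v‖ := by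
    have hsummable : Summable fun k : ℕ => M * (4 / (α ^ 2 * ((k:ℝ) + 1) ^ 2)) * (2 * π) := by
      have h0 : Summable fun k : ℕ => 1 / ((k:ℝ) + 1) ^ 2 := by
        have := (summable_nat_add_iff (f := fun n : ℕ => 1 / (n:ℝ) ^ 2) 1).mpr
          (Real.summable_one_div_nat_pow.mpr one_lt_two)
        refine this.congr fun n => ?_
        push_cast
        ring
      refine (h0.mul_left (M * 4 * (2 * π) / α ^ 2)).congr fun n => ?_
      field_simp
      try ring
    refine Summable.of_nonneg_of_le (fun k => MeasureTheory.integral_nonneg fun v => norm_nonneg _)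
      (fun k => ?_) hsummable
    have heq : ∫ v in Set.Ioc (-π) π, ‖F k v‖ = ∫ v in (-π)..π, ‖F k v‖ :=
      (intervalIntegral.integral_of_le (by linarith)).symm
    rw [heq]
    have hmono := intervalIntegral.integral_mono_on (μ := MeasureTheory.volume) (a := -π) (b := π)
      (f := fun v => ‖F k v‖) (g := fun _ => M * (4 / (α ^ 2 * ((k:ℝ) + 1) ^ 2)))
      (by linarith) ((hFcont k).norm.intervalIntegrable _ _) (intervalIntegrable_const)
      (fun v hv => by
        have hfv : |f (t + v)| ≤ M := hM (t + v) ⟨by linarith [hv.1], by linarith [hv.2]⟩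
        have hcos : |Real.cos (((k:ℝ) + 1) * v)| ≤ 1 := Real.abs_cos_le_one _
        have hs := hsinc k
        have hs0 : (0:ℝ) ≤ (_root_.sinc (((k:ℝ) + 1) * α / 2)) ^ 2 := sq_nonneg _
        simp only [hFdef, norm_mul, Real.norm_eq_abs, abs_mul, abs_pow, sq_abs]
        calc |f (t + v)| * ((_root_.sinc (((k:ℝ) + 1) * α / 2)) ^ 2 * |Real.cos (((k:ℝ) + 1) * v)|)
            ≤ M * ((4 / (α ^ 2 * ((k:ℝ) + 1) ^ 2)) * 1) := by
              apply mul_le_mul hfv _ (by positivity) hM0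
              exact mul_le_mul hs hcos (abs_nonneg _) (by positivity)
          _ = M * (4 / (α ^ 2 * ((k:ℝ) + 1) ^ 2)) := by ring
        )
    calc ∫ v in (-π)..π, ‖F k v‖ ≤ ∫ _ in (-π)..π, M * (4 / (α ^ 2 * ((k:ℝ) + 1) ^ 2)) := hmono
      _ = M * (4 / (α ^ 2 * ((k:ℝ) + 1) ^ 2)) * (2 * π) := by
          rw [intervalIntegral.integral_const]
          simp
          ring
  have hkey := MeasureTheory.hasSum_integral_of_summable_integral_norm
    (F := F) (μ := MeasureTheory.volume.restrict (Set.Ioc (-π) π)) hint hF_sum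
  have hkey2 := hkey.mul_left (1 / π)
  -- identify the terms
  have hterm : ∀ k : ℕ,
      (_root_.sinc (((k:ℝ) + 1) * α / 2)) ^ 2 *
          (a (k + 1) * Real.cos (((k:ℝ) + 1) * t) + b (k + 1) * Real.sin (((k:ℝ) + 1) * t))
        = (1 / π) * ∫ v in Set.Ioc (-π) π, F k v := by
    intro k
    have hc := coeff_eq hf hper ha hb t (k + 1)
    push_cast at hc
    rw [hc, ← intervalIntegral.integral_of_le (by linarith : -π ≤ π), mul_left_comm]
    congr 1
    rw [← intervalIntegral.integral_const_mul]
    apply intervalIntegral.integral_congr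
    intro v _
    simp only [hFdef]
    ring
  -- identify the value
  have hval : (1 / π) * ∫ v in Set.Ioc (-π) π, ∑' k, F k v
      = (1 / α ^ 2) * (∫ u in (-α)..α, f (t + u) * (α - |u|)) - a 0 / 2 := by
    have htsum : ∀ v ∈ Set.Ioc (-π) π,
        ∑' k, F k v = f (t + v) * ((π / α ^ 2) * max (α - |v|) 0 - 1 / 2) := by
      intro v hv
      have hvabs : |v| ≤ π := abs_le.mpr ⟨le_of_lt hv.1, hv.2⟩
      exact ((kernel_hasSum hα0 hαπ hvabs).mul_left (f (t + v))).tsum_eq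
    rw [MeasureTheory.setIntegral_congr_fun measurableSet_Ioc htsum]
    rw [← intervalIntegral.integral_of_le (by linarith : -π ≤ π)]
    -- split the integral
    have hmaxc : Continuous fun v : ℝ => max (α - |v|) 0 :=
      (continuous_const.sub continuous_abs).max continuous_const
    have hsplit : ∫ v in (-π)..π, f (t + v) * ((π / α ^ 2) * max (α - |v|) 0 - 1 / 2)
        = (π / α ^ 2) * (∫ v in (-π)..π, f (t + v) * max (α - |v|) 0)
          - (1 / 2) * ∫ v in (-π)..π, f (t + v) := by
      rw [← intervalIntegral.integral_const_mul, ← intervalIntegral.integral_const_mul,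
        ← intervalIntegral.integral_sub
          (f := fun x => π / α ^ 2 * (f (t + x) * max (α - |x|) 0))
          (g := fun x => 1 / 2 * f (t + x))
          ((continuous_const.mul (hft.mul hmaxc)).intervalIntegrable _ _)
          ((continuous_const.mul hft).intervalIntegrable _ _)]
      apply intervalIntegral.integral_congr
      intro v _
      ring
    rw [hsplit]
    -- hat integral
    have hhat : ∫ v in (-π)..π, f (t + v) * max (α - |v|) 0
        = ∫ u in (-α)..α, f (t + u) * (α - |u|) := by
      have hig : ∀ c d : ℝ, IntervalIntegrable (fun v => f (t + v) * max (α - |v|) 0)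
          MeasureTheory.volume c d := fun c d => (hft.mul hmaxc).intervalIntegrable _ _
      rw [← intervalIntegral.integral_add_adjacent_intervals (a := -π) (b := -α) (c := π)
        (hig _ _) (hig _ _),
        ← intervalIntegral.integral_add_adjacent_intervals (a := -α) (b := α) (c := π)
        (hig _ _) (hig _ _)]
      have hz1 : ∫ v in (-π)..(-α), f (t + v) * max (α - |v|) 0 = 0 := by
        rw [intervalIntegral.integral_congr (g := fun _ => (0:ℝ)) ?_, intervalIntegral.integral_zero]
        intro v hv
        rw [Set.uIcc_of_le (by linarith)] at hv
        have : α - |v| ≤ 0 := by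
          have : α ≤ |v| := le_trans (by linarith [hv.2] : α ≤ -v) (neg_le_abs v)
          linarith
        simp [max_eq_right this]
      have hz2 : ∫ v in α..π, f (t + v) * max (α - |v|) 0 = 0 := by
        rw [intervalIntegral.integral_congr (g := fun _ => (0:ℝ)) ?_, intervalIntegral.integral_zero]
        intro v hv
        rw [Set.uIcc_of_le (by linarith)] at hv
        have : α - |v| ≤ 0 := by
          have : α ≤ |v| := le_trans hv.1 (le_abs_self v)
          linarith
        simp [max_eq_right this]
      have hmid : ∫ v in (-α)..α, f (t + v) * max (α - |v|) 0
          = ∫ u in (-α)..α, f (t + u) * (α - |u|) := by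
        apply intervalIntegral.integral_congr
        intro v hv
        rw [Set.uIcc_of_le (by linarith)] at hv
        have h0 : 0 ≤ α - |v| := by
          have : |v| ≤ α := abs_le.mpr ⟨hv.1, hv.2⟩
          linarith
        simp only [max_eq_left h0]
      rw [hz1, hz2, hmid]
      ring
    rw [hhat]
    -- a 0
    have ha0 : a 0 = (1 / π) * ∫ v in (-π)..π, f (t + v) := by
      rw [ha 0]
      congr 1
      have := integral_shift hf hper t 0
      simpa using this
    rw [ha0]
    field_simp
  rw [← hval]
  convert hkey2 using 2 with k
  · rfl
  exact hterm k
end
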